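/- For every odd integer n ≥ 3 and every integer ξ with 1 ≤ ξ ≤ n−1, every eigenvalue β of the matrix M(ξ) satisfies −1 < β < 1. -/

import Mathlib

/-- The `n×n` real symmetric matrix `M(ξ)` with `(j,j)` entry `(1/2)·cos(2πξj/n)`,
entries `1/4` for `k ≡ j ± 1 (mod n)` (including the corners), and `0` elsewhere. -/
noncomputable def Mmat (n : ℕ) (ξ : ℤ) : Matrix (Fin n) (Fin n) ℝ :=
  Matrix.of fun j k =>
    if k = j then (1/2) * Real.cos (2 * Real.pi * (ξ : ℝ) * ((j : ℕ) : ℝ) / (n : ℝ))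
    else if ((k : ℕ) : ZMod n) = ((j : ℕ) : ZMod n) + 1 ∨
        ((k : ℕ) : ZMod n) = ((j : ℕ) : ZMod n) - 1 then 1/4
    else 0

lemma finZMod_inj {n : ℕ} [NeZero n] {j k : Fin n}
    (h : ((j : ℕ) : ZMod n) = ((k : ℕ) : ZMod n)) : j = k := by
  have := congrArg ZMod.val h
  rw [ZMod.val_natCast_of_lt j.isLt, ZMod.val_natCast_of_lt k.isLt] at this
  exact Fin.val_injective this

lemma finZMod_add_one {n : ℕ} [NeZero n] (j : Fin n) :
    (((j + 1 : Fin n) : ℕ) : ZMod n) = ((j : ℕ) : ZMod n) + 1 := by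
  rw [Fin.add_def]
  push_cast [ZMod.natCast_mod, Fin.val_one']
  rfl

lemma finZMod_sub_one {n : ℕ} [NeZero n] (j : Fin n) :
    (((j - 1 : Fin n) : ℕ) : ZMod n) = ((j : ℕ) : ZMod n) - 1 := by
  have := finZMod_add_one (j - 1)
  rw [sub_add_cancel] at this
  rw [eq_sub_iff_add_eq, ← this]

/-- For every odd `n ≥ 3` and every `1 ≤ ξ ≤ n - 1`, every eigenvalue `β` of `M(ξ)`
satisfies `-1 < β < 1`. -/
theorem Mmat_eigenvalues_strictly_between (n : ℕ) (hodd : Odd n) (hn : 3 ≤ n) (ξ : ℕ)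
    (hξ₁ : 1 ≤ ξ) (hξ₂ : ξ ≤ n - 1) :
    ∀ β ∈ spectrum ℝ (Mmat n (ξ : ℤ)), -1 < β ∧ β < 1 := by
  haveI : NeZero n := ⟨by omega⟩
  intro β hβ
  -- obtain an eigenvector
  obtain ⟨v, hv0, hMv⟩ : ∃ v : Fin n → ℝ, v ≠ 0 ∧ (Mmat n (ξ : ℤ)).mulVec v = β • v := by
    rw [← AlgEquiv.spectrum_eq (Matrix.toLinAlgEquiv' (R := ℝ) (n := Fin n)) (Mmat n (ξ:ℤ)),
      ← Module.End.hasEigenvalue_iff_mem_spectrum] at hβ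
    obtain ⟨w, hw⟩ := hβ.exists_hasEigenvector
    exact ⟨w, hw.2, by simpa [Matrix.toLinAlgEquiv'_apply, Matrix.toLin'_apply] using hw.1⟩
  set d : Fin n → ℝ := fun j => Real.cos (2 * Real.pi * ((ξ:ℤ) : ℝ) * ((j : ℕ) : ℝ) / (n : ℝ))
    with hd_def
  -- neighbor conditions as Fin equalities
  have hp : ∀ j k : Fin n, (((k:ℕ):ZMod n) = ((j:ℕ):ZMod n) + 1) ↔ k = j + 1 := fun j k =>
    ⟨fun h => finZMod_inj (h.trans (finZMod_add_one j).symm), fun h => h ▸ finZMod_add_one j⟩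
  have hm : ∀ j k : Fin n, (((k:ℕ):ZMod n) = ((j:ℕ):ZMod n) - 1) ↔ k = j - 1 := fun j k =>
    ⟨fun h => finZMod_inj (h.trans (finZMod_sub_one j).symm), fun h => h ▸ finZMod_sub_one j⟩
  have hMapply : ∀ j k : Fin n, Mmat n (ξ:ℤ) j k =
      if k = j then (1/2) * d j else if k = j + 1 ∨ k = j - 1 then (1/4 : ℝ) else 0 := by
    intro j k
    simp only [Mmat, Matrix.of_apply, hp j k, hm j k, hd_def]
  -- distinctness of j, j+1, j-1
  have h20 : ((2:ℕ) : ZMod n) ≠ 0 := by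
    rw [Ne, ZMod.natCast_eq_zero_iff]
    intro hdvd
    have := Nat.le_of_dvd (by norm_num) hdvd
    omega
  have h10 : ((1:ℕ) : ZMod n) ≠ 0 := by
    rw [Ne, ZMod.natCast_eq_zero_iff]
    intro hdvd
    have := Nat.le_of_dvd (by norm_num) hdvd
    omega
  have hne1 : ∀ j : Fin n, j + 1 ≠ j := by
    intro j h
    have := finZMod_add_one j
    rw [h] at this
    apply h10
    push_cast
    linear_combination -this
  have hne2 : ∀ j : Fin n, j - 1 ≠ j := by
    intro j h
    have := finZMod_sub_one j
    rw [h] at this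
    apply h10
    push_cast
    linear_combination this
  have hne3 : ∀ j : Fin n, j + 1 ≠ j - 1 := by
    intro j h
    have h1 := finZMod_add_one j
    rw [h, finZMod_sub_one j] at h1
    apply h20
    push_cast
    linear_combination -h1
  -- mulVec formula
  have hmv : ∀ j : Fin n, (Mmat n (ξ:ℤ)).mulVec v j
      = (1/2) * d j * v j + (1/4) * v (j+1) + (1/4) * v (j-1) := by
    intro j
    have hsplit : ∀ k : Fin n, Mmat n (ξ:ℤ) j k * v k
        = (if k = j then (1/2) * d j * v k else 0)
        + (if k = j + 1 then (1/4) * v k else 0)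
        + (if k = j - 1 then (1/4) * v k else 0) := by
      intro k
      rw [hMapply j k]
      by_cases h1 : k = j
      · subst h1
        simp [Ne.symm (hne1 k), Ne.symm (hne2 k)]
      · by_cases h2 : k = j + 1
        · subst h2
          simp [hne1 j, hne3 j, h1]
        · by_cases h3 : k = j - 1
          · subst h3
            simp [hne2 j, Ne.symm (hne3 j), h1]
          · simp [h1, h2, h3]
    rw [Matrix.mulVec, dotProduct, Finset.sum_congr rfl (fun k _ => hsplit k),
      Finset.sum_add_distrib, Finset.sum_add_distrib,
      Finset.sum_ite_eq', Finset.sum_ite_eq', Finset.sum_ite_eq']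
    simp
  have heig : ∀ j : Fin n, (Mmat n (ξ:ℤ)).mulVec v j = β * v j := by
    intro j; rw [hMv]; simp
  -- abbreviations
  set S := ∑ j : Fin n, v j ^ 2 with hS_def
  set T := ∑ j : Fin n, v j * v (j+1) with hT_def
  set C := ∑ j : Fin n, d j * v j ^ 2 with hC_def
  have hS' : ∑ j : Fin n, v (j+1) ^ 2 = S := by
    rw [hS_def]
    exact Fintype.sum_equiv (Equiv.addRight (1 : Fin n)) _ _ (fun x => by
      simp [Equiv.coe_addRight])
  have hTm : ∑ j : Fin n, v j * v (j-1) = T := by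
    rw [hT_def]
    exact (Fintype.sum_equiv (Equiv.addRight (1 : Fin n)) _ _ (fun x => by
      simp [Equiv.coe_addRight, add_sub_cancel_right, mul_comm])).symm
  -- key identity
  have hexp : ∑ j : Fin n, v j * ((Mmat n (ξ:ℤ)).mulVec v j)
      = ∑ j : Fin n, ((1/2) * (d j * v j ^ 2)
        + ((1/4) * (v j * v (j+1)) + (1/4) * (v j * v (j-1)))) :=
    Finset.sum_congr rfl fun j _ => by rw [hmv j]; ring
  have hkey : β * S = (1/2) * C + (1/2) * T := by
    have h1 : β * S = ∑ j : Fin n, v j * ((Mmat n (ξ:ℤ)).mulVec v j) := by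
      rw [hS_def, Finset.mul_sum]
      exact Finset.sum_congr rfl fun j _ => by rw [heig j]; ring
    rw [h1, hexp, Finset.sum_add_distrib, Finset.sum_add_distrib,
      ← Finset.mul_sum, ← Finset.mul_sum, ← Finset.mul_sum, hTm, ← hC_def, ← hT_def]
    ring
  -- positivity of S
  obtain ⟨a, ha⟩ := Function.ne_iff.mp hv0
  rw [Pi.zero_apply] at ha
  have hS_pos : 0 < S := by
    have h1 : (0:ℝ) < v a ^ 2 := lt_of_le_of_ne (sq_nonneg _) (Ne.symm (pow_ne_zero 2 ha))
    have h2 : v a ^ 2 ≤ S := Finset.single_le_sum (fun j _ => sq_nonneg (v j))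
      (Finset.mem_univ a)
    linarith
  constructor
  · -- lower bound
    have hWexp : ∑ j : Fin n, (v j + v (j+1))^2
        = ∑ j : Fin n, (v j ^ 2 + (v (j+1) ^ 2 + 2 * (v j * v (j+1)))) :=
      Finset.sum_congr rfl fun j _ => by ring
    have hW : ∑ j : Fin n, (v j + v (j+1))^2 = 2*S + 2*T := by
      rw [hWexp, Finset.sum_add_distrib, Finset.sum_add_distrib, hS',
        ← Finset.mul_sum, ← hS_def, ← hT_def]
      ring
    have hQ : ∀ j : Fin n, 0 ≤ (1 + d j) * v j ^ 2 := by
      intro j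
      apply mul_nonneg _ (sq_nonneg _)
      have := Real.neg_one_le_cos (2 * Real.pi * ((ξ:ℤ):ℝ) * ((j:ℕ):ℝ) / n)
      simp only [hd_def]
      linarith
    have hQ_eq : ∑ j : Fin n, (1 + d j) * v j ^ 2 = S + C := by
      have h1 : ∑ j : Fin n, (1 + d j) * v j ^ 2
          = ∑ j : Fin n, (v j ^ 2 + d j * v j ^ 2) :=
        Finset.sum_congr rfl fun j _ => by ring
      rw [h1, Finset.sum_add_distrib, ← hS_def, ← hC_def]
    have hQ_nonneg : 0 ≤ S + C := by
      rw [← hQ_eq]; exact Finset.sum_nonneg fun j _ => hQ j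
    have hW_pos : 0 < 2*S + 2*T := by
      rw [← hW]
      rcases (Finset.sum_nonneg (fun j (_ : j ∈ Finset.univ) =>
        sq_nonneg (v j + v (j+1)))).lt_or_eq with h | h
      · exact h
      · exfalso
        have hz : ∀ j : Fin n, v (j+1) = - v j := by
          intro j
          have h0 := (Finset.sum_eq_zero_iff_of_nonneg
            (fun j (_ : j ∈ Finset.univ) => sq_nonneg (v j + v (j+1)))).mp h.symm j
            (Finset.mem_univ j)
          have h2 : v j + v (j+1) = 0 := pow_eq_zero_iff (n := 2) (by norm_num) |>.mp h0
          linarith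
        open Fin.NatCast in
        have key : ∀ m : ℕ, v ((m : Fin n)) = (-1)^m * v 0 := by
          intro m
          induction m with
          | zero => simp
          | succ m ih =>
            rw [Nat.cast_add, Nat.cast_one, hz, ih]
            ring
        have h0 : v 0 = 0 := by
          have hk := key n
          rw [Fin.natCast_self, Odd.neg_one_pow hodd] at hk
          linarith
        apply ha
        have hva := key a.val
        rw [Fin.cast_val_eq_self, h0, mul_zero] at hva
        exact hva
    have hsum : (1 + β) * S = (1/2) * (S + C) + (1/4) * (2*S + 2*T) := by
      linear_combination hkey
    nlinarith
  · -- upper bound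
    have hUexp : ∑ j : Fin n, (v j - v (j+1))^2
        = ∑ j : Fin n, (v j ^ 2 + (v (j+1) ^ 2 + (-2) * (v j * v (j+1)))) :=
      Finset.sum_congr rfl fun j _ => by ring
    have hU : ∑ j : Fin n, (v j - v (j+1))^2 = 2*S - 2*T := by
      rw [hUexp, Finset.sum_add_distrib, Finset.sum_add_distrib, hS',
        ← Finset.mul_sum, ← hS_def, ← hT_def]
      ring
    have hP : ∀ j : Fin n, 0 ≤ (1 - d j) * v j ^ 2 := by
      intro j
      apply mul_nonneg _ (sq_nonneg _)
      have := Real.cos_le_one (2 * Real.pi * ((ξ:ℤ):ℝ) * ((j:ℕ):ℝ) / n)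
      simp only [hd_def]
      linarith
    have hP_eq : ∑ j : Fin n, (1 - d j) * v j ^ 2 = S - C := by
      have h1 : ∑ j : Fin n, (1 - d j) * v j ^ 2
          = ∑ j : Fin n, (v j ^ 2 - d j * v j ^ 2) :=
        Finset.sum_congr rfl fun j _ => by ring
      rw [h1, Finset.sum_sub_distrib, ← hS_def, ← hC_def]
    have hpos : 0 < (S - C) + (2*S - 2*T) := by
      rw [← hP_eq, ← hU]
      rcases (Finset.sum_nonneg (fun j (_ : j ∈ Finset.univ) =>
        sq_nonneg (v j - v (j+1)))).lt_or_eq with h | h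
      · have := Finset.sum_nonneg fun j (_ : j ∈ Finset.univ) => hP j
        linarith
      · -- v is constant
        have hz : ∀ j : Fin n, v (j+1) = v j := by
          intro j
          have h0 := (Finset.sum_eq_zero_iff_of_nonneg
            (fun j (_ : j ∈ Finset.univ) => sq_nonneg (v j - v (j+1)))).mp h.symm j
            (Finset.mem_univ j)
          have h2 : v j - v (j+1) = 0 := pow_eq_zero_iff (n := 2) (by norm_num) |>.mp h0
          linarith
        open Fin.NatCast in
        have key : ∀ m : ℕ, v ((m : Fin n)) = v 0 := by
          intro m
          induction m with
          | zero => simp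
          | succ m ih => rw [Nat.cast_add, Nat.cast_one, hz, ih]
        have hconst : ∀ j : Fin n, v j = v 0 := by
          intro j
          have := key j.val
          rwa [Fin.cast_val_eq_self] at this
        have hv0ne : v 0 ≠ 0 := fun h0 => ha (by rw [hconst a, h0])
        have hval1 : (((1 : Fin n) : ℕ) : ℝ) = 1 := by
          rw [Fin.val_one', Nat.mod_eq_of_lt (by omega)]
          norm_num
        have hd1 : d 1 < 1 := by
          simp only [hd_def]
          refine lt_of_le_of_ne (Real.cos_le_one _) ?_
          intro hcos
          rw [Real.cos_eq_one_iff] at hcos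
          obtain ⟨m, hmm⟩ := hcos
          rw [hval1] at hmm
          have hπ : (0:ℝ) < Real.pi := Real.pi_pos
          have hn0 : (0:ℝ) < (n:ℝ) := by positivity
          have hmn : (m:ℝ) * n = (ξ:ℝ) := by
            have h2 : ((m:ℝ) * n) * (2 * Real.pi) = (ξ:ℝ) * (2 * Real.pi) := by
              field_simp at hmm
              push_cast at hmm ⊢
              linear_combination (2 * Real.pi) * hmm
            exact mul_right_cancel₀ (by positivity) h2
          have hmnz : m * (n:ℤ) = (ξ:ℤ) := by exact_mod_cast hmn
          have hdvd : (n:ℤ) ∣ (ξ:ℤ) := ⟨m, by rw [← hmnz]; ring⟩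
          have := Int.le_of_dvd (by exact_mod_cast hξ₁) hdvd
          omega
        have hterm : 0 < (1 - d 1) * v 1 ^ 2 := by
          have hpos1 : 0 < v 1 ^ 2 := by
            rw [hconst 1]
            exact lt_of_le_of_ne (sq_nonneg _) (Ne.symm (pow_ne_zero 2 hv0ne))
          nlinarith
        have hle : (1 - d 1) * v 1 ^ 2 ≤ ∑ j : Fin n, (1 - d j) * v j ^ 2 :=
          Finset.single_le_sum (fun j _ => hP j) (Finset.mem_univ 1)
        have hU_nonneg : (0:ℝ) ≤ ∑ j : Fin n, (v j - v (j+1))^2 :=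
          Finset.sum_nonneg fun j _ => sq_nonneg _
        linarith
    have hsum : (1 - β) * S = (1/2) * (S - C) + (1/4) * (2*S - 2*T) := by
      linear_combination -hkey
    have h1 : 0 ≤ S - C := by
      rw [← hP_eq]; exact Finset.sum_nonneg fun j _ => hP j
    have h2 : 0 ≤ 2*S - 2*T := by
      rw [← hU]; exact Finset.sum_nonneg fun j _ => sq_nonneg _
    nlinarith
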